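/- arXiv:2602.15377 — 2 statements merged into one kernel-verified Lean document; each statement's English description precedes it below -/
import Mathlib

section
/- In the greedy algorithm for weighted set cover that at each step picks the set maximizing (newly covered elements)/(cost), if at some step the uncovered set U is nonempty and the optimal solution OPT covers U with total cost c(OPT), then there exists an available set D_j with |S_j ∩ U|/c_j ≥ |U|/c(OPT). -/
/-- In the weighted greedy step: if `U` is nonempty and `OPT` covers `U` with total cost
`c(OPT) > 0`, then some set `S_j` with `j ∈ OPT` satisfies `|S_j ∩ U|/c_j ≥ |U|/c(OPT)`. -/
theorem greedy_step_density {N ι : Type*} [DecidableEq ι]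
    (S : N → Finset ι) (c : N → ℝ) (hc : ∀ i, 0 < c i)
    (U : Finset ι) (hU : U.Nonempty) (OPT : Finset N)
    (hcov : U ⊆ OPT.biUnion S) (hpos : 0 < ∑ i ∈ OPT, c i) :
    ∃ j ∈ OPT, (U.card : ℝ) / (∑ i ∈ OPT, c i) ≤ ((S j ∩ U).card : ℝ) / c j := by
  by_contra h
  push_neg at h
  have hne : OPT.Nonempty := by
    rcases OPT.eq_empty_or_nonempty with rfl | h'
    · simp at hpos
    · exact h'
  set C := ∑ i ∈ OPT, c i with hC
  have hcard : (U.card : ℝ) ≤ ∑ j ∈ OPT, ((S j ∩ U).card : ℝ) := by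
    have : U.card ≤ ∑ j ∈ OPT, (S j ∩ U).card := by
      calc U.card = (OPT.biUnion (fun j => S j ∩ U)).card := by
            congr 1
            apply Finset.Subset.antisymm
            · intro x hx
              rcases Finset.mem_biUnion.mp (hcov hx) with ⟨j, hj, hxj⟩
              exact Finset.mem_biUnion.mpr ⟨j, hj, Finset.mem_inter.mpr ⟨hxj, hx⟩⟩
            · intro x hx
              rcases Finset.mem_biUnion.mp hx with ⟨j, _, hxj⟩
              exact (Finset.mem_inter.mp hxj).2
        _ ≤ ∑ j ∈ OPT, (S j ∩ U).card := Finset.card_biUnion_le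
    exact_mod_cast this
  have hlt : ∀ j ∈ OPT, ((S j ∩ U).card : ℝ) < (U.card / C) * c j := by
    intro j hj
    have h1 := h j hj
    have hcj := hc j
    rw [div_lt_div_iff₀ hcj hpos] at h1
    calc ((S j ∩ U).card : ℝ) = ((S j ∩ U).card : ℝ) * C / C := by
          field_simp
      _ < (U.card : ℝ) * c j / C := by gcongr
      _ = (U.card / C) * c j := by ring
  have hsum : ∑ j ∈ OPT, ((S j ∩ U).card : ℝ) < ∑ j ∈ OPT, (U.card / C) * c j :=
    Finset.sum_lt_sum_of_nonempty hne hlt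
  have : ∑ j ∈ OPT, (U.card / C) * c j = U.card := by
    rw [← Finset.mul_sum, ← hC]
    field_simp
  linarith
end

section
/- If a fractional LP solution satisfies ∑_{i : ι ∈ S_i} x_i* ≥ 1 for an element ι, and each set D_i containing ι is independently included with probability min(1, α·x_i*), then the probability that ι is not covered is at most e^{−α}. -/
/-- If the LP covering constraint `∑_{i : ι ∈ S_i} x_i* ≥ 1` holds and each set
containing `ι` is included independently with probability `min(1, α·x_i*)`, then the
probability that `ι` is uncovered, `∏_{i : ι ∈ S_i} (1 − min(1, α·x_i*))`,
is at most `e^{−α}`. -/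
theorem rounding_uncovered_prob {N I : Type*} [Fintype N]
    (S : N → Finset I) (ι : I) [DecidablePred fun i => ι ∈ S i]
    (x : N → ℝ) (hx : ∀ i, 0 ≤ x i ∧ x i ≤ 1) (α : ℝ) (hα : 0 ≤ α)
    (hcov : 1 ≤ ∑ i ∈ Finset.univ.filter (fun i => ι ∈ S i), x i) :
    ∏ i ∈ Finset.univ.filter (fun i => ι ∈ S i), (1 - min 1 (α * x i))
      ≤ Real.exp (-α) := by
  calc ∏ i ∈ Finset.univ.filter (fun i => ι ∈ S i), (1 - min 1 (α * x i))
      ≤ ∏ i ∈ Finset.univ.filter (fun i => ι ∈ S i), Real.exp (-(α * x i)) := by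
        apply Finset.prod_le_prod
        · intro i _
          simp [min_le_left]
        · intro i _
          rcases le_or_gt (α * x i) 1 with h | h
          · rw [min_eq_right h]
            linarith [Real.add_one_le_exp (-(α * x i))]
          · rw [min_eq_left h.le]
            simp [(Real.exp_pos _).le]
    _ = Real.exp (-(α * ∑ i ∈ Finset.univ.filter (fun i => ι ∈ S i), x i)) := by
        rw [← Real.exp_sum, Finset.mul_sum]
        simp [Finset.sum_neg_distrib]
    _ ≤ Real.exp (-α) := by
        apply Real.exp_le_exp.mpr
        nlinarith
end
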